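/- Lemma 2 (existence of a channel realization with surjective Jacobian), linear-map form. Let K, L ≥ 1, d_α, d_β ≥ 1, and let N_{αk} ≥ d_α (k = 1,…,K) and N_{βl} ≥ d_β (l = 1,…,L) satisfy: d_β divides N_{αk} − d_α and d_α divides N_{βl} − d_β for all k, l; and for every I_α ⊆ {1,…,K} and I_β ⊆ {1,…,L}, |I_α| |I_β| d_α d_β ≤ ∑_{k∈I_α} d_α(N_{αk} − d_α) + ∑_{l∈I_β} d_β(N_{βl} − d_β). Then there exist matrices G^{(3)}_{kl} ∈ ℂ^{(N_{αk}−d_α)×d_β} and G^{(2)}_{kl} ∈ ℂ^{d_α×(N_{βl}−d_β)} (k = 1,…,K, l = 1,…,L) such that the ℂ-linear map sending a tuple ((Ū_k)_{k=1}^K, (V̄_l)_{l=1}^L), with Ū_k ∈ ℂ^{(N_{αk}−d_α)×d_α} and V̄_l ∈ ℂ^{(N_{βl}−d_β)×d_β}, to the tuple (Ū_k† G^{(3)}_{kl} + G^{(2)}_{kl} V̄_l)_{k=1,…,K; l=1,…,L} ∈ ∏_{k,l} ℂ^{d_α×d_β} is surjective. -/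

import Mathlib

open Matrix

private lemma sum_mul_ite_eq {N : ℕ} {P : Type*} [Fintype P] [DecidableEq P]
    (e : Fin N ≃ P) (g : Fin N → ℂ) (p : P) :
    ∑ r, g r * (if e r = p then 1 else 0) = g (e.symm p) := by
  rw [Fintype.sum_eq_single (e.symm p)]
  · simp
  · intro r hr
    rw [if_neg, mul_zero]
    intro hp
    exact hr (by rw [← hp, Equiv.symm_apply_apply])

private lemma sum_ite_mul_eq {N : ℕ} {P : Type*} [Fintype P] [DecidableEq P]
    (e : Fin N ≃ P) (g : Fin N → ℂ) (p : P) :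
    ∑ r, (if e r = p then (1:ℂ) else 0) * g r = g (e.symm p) := by
  rw [Fintype.sum_eq_single (e.symm p)]
  · simp
  · intro r hr
    rw [if_neg, zero_mul]
    intro hp
    exact hr (by rw [← hp, Equiv.symm_apply_apply])


private lemma exists_ia_matching (K L : ℕ) (m : Fin K → ℕ) (n : Fin L → ℕ)
    (h : ∀ (Iα : Finset (Fin K)) (Iβ : Finset (Fin L)),
      Iα.card * Iβ.card ≤ ∑ k ∈ Iα, m k + ∑ l ∈ Iβ, n l) :
    ∃ f : Fin K × Fin L → (Σ k, Fin (m k)) ⊕ (Σ l, Fin (n l)),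
      Function.Injective f ∧
      ∀ (k : Fin K) (l : Fin L),
        (∃ i, f (k, l) = Sum.inl ⟨k, i⟩) ∨ (∃ j, f (k, l) = Sum.inr ⟨l, j⟩) := by
  classical
  set slotα : Fin K → Finset ((Σ k, Fin (m k)) ⊕ (Σ l, Fin (n l))) :=
    fun k => Finset.univ.image fun i : Fin (m k) => Sum.inl ⟨k, i⟩ with hslotα
  set slotβ : Fin L → Finset ((Σ k, Fin (m k)) ⊕ (Σ l, Fin (n l))) :=
    fun l => Finset.univ.image fun j : Fin (n l) => Sum.inr ⟨l, j⟩ with hslotβ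
  have cardα : ∀ k, (slotα k).card = m k := by
    intro k
    rw [hslotα]
    rw [Finset.card_image_of_injective _ (fun i j hij => by simpa using hij)]
    simp
  have cardβ : ∀ l, (slotβ l).card = n l := by
    intro l
    rw [hslotβ]
    rw [Finset.card_image_of_injective _ (fun i j hij => by simpa using hij)]
    simp
  set t : Fin K × Fin L → Finset ((Σ k, Fin (m k)) ⊕ (Σ l, Fin (n l))) := fun p => slotα p.1 ∪ slotβ p.2 with ht
  have hall : ∀ s : Finset (Fin K × Fin L), s.card ≤ (s.biUnion t).card := by
    intro s
    set Iα := s.image Prod.fst with hIα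
    set Iβ := s.image Prod.snd with hIβ
    have h1 : s.card ≤ Iα.card * Iβ.card := by
      calc s.card ≤ (Iα ×ˢ Iβ).card := Finset.card_le_card Finset.subset_product
        _ = Iα.card * Iβ.card := Finset.card_product _ _
    have hbU : s.biUnion t = Iα.biUnion slotα ∪ Iβ.biUnion slotβ := by
      ext a
      simp only [Finset.mem_biUnion, Finset.mem_union, ht, hIα, hIβ, Finset.mem_image]
      constructor
      · rintro ⟨p, hp, hmem | hmem⟩
        · exact Or.inl ⟨p.1, ⟨p, hp, rfl⟩, hmem⟩
        · exact Or.inr ⟨p.2, ⟨p, hp, rfl⟩, hmem⟩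
      · rintro (⟨k, ⟨p, hp, rfl⟩, hmem⟩ | ⟨l, ⟨p, hp, rfl⟩, hmem⟩)
        · exact ⟨p, hp, Or.inl hmem⟩
        · exact ⟨p, hp, Or.inr hmem⟩
    have cardbα : (Iα.biUnion slotα).card = ∑ k ∈ Iα, m k := by
      rw [Finset.card_biUnion]
      · exact Finset.sum_congr rfl fun k _ => cardα k
      · intro k _ k' _ hkk'
        simp only [Finset.disjoint_left, hslotα, Finset.mem_image]
        rintro a ⟨i, -, rfl⟩ ⟨i', -, hi'⟩
        apply hkk'
        simpa using (congrArg (fun x : (Σ k, Fin (m k)) ⊕ (Σ l, Fin (n l)) => match x with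
          | Sum.inl s => s.1 | Sum.inr _ => k) hi').symm
    have cardbβ : (Iβ.biUnion slotβ).card = ∑ l ∈ Iβ, n l := by
      rw [Finset.card_biUnion]
      · exact Finset.sum_congr rfl fun l _ => cardβ l
      · intro l _ l' _ hll'
        simp only [Finset.disjoint_left, hslotβ, Finset.mem_image]
        rintro a ⟨j, -, rfl⟩ ⟨j', -, hj'⟩
        apply hll'
        simpa using (congrArg (fun x : (Σ k, Fin (m k)) ⊕ (Σ l, Fin (n l)) => match x with
          | Sum.inl _ => l | Sum.inr s => s.1) hj').symm
    have hdisj : Disjoint (Iα.biUnion slotα) (Iβ.biUnion slotβ) := by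
      simp only [Finset.disjoint_left, Finset.mem_biUnion, hslotα, hslotβ, Finset.mem_image]
      rintro a ⟨k, -, i, -, rfl⟩ ⟨l, -, j, -, hj⟩
      exact absurd hj (by simp)
    rw [hbU, Finset.card_union_of_disjoint hdisj, cardbα, cardbβ]
    exact h1.trans (h Iα Iβ)
  obtain ⟨f, hfinj, hft⟩ := (Finset.all_card_le_biUnion_card_iff_exists_injective t).mp hall
  refine ⟨f, hfinj, fun k l => ?_⟩
  have := hft (k, l)
  simp only [ht, hslotα, hslotβ, Finset.mem_union, Finset.mem_image, Finset.mem_univ,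
    true_and] at this
  rcases this with ⟨i, hi⟩ | ⟨j, hj⟩
  · exact Or.inl ⟨i, hi.symm⟩
  · exact Or.inr ⟨j, hj.symm⟩


/-- **Lemma 2 (existence of a channel realization with surjective Jacobian),
linear-map form.** Under the divisibility conditions and the product-subset
inequality (conditions (19d) and (19e) of Theorem 3), there exist channel
blocks `G⁽³⁾ₖₗ` and `G⁽²⁾ₖₗ` such that the map sending the variable blocks
`(Ūₖ, V̄ₗ)` to `(Ūₖᴴ G⁽³⁾ₖₗ + G⁽²⁾ₖₗ V̄ₗ)ₖₗ` is surjective. -/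
theorem exists_channel_with_surjective_jacobian (K L dα dβ : ℕ)
    (hK : 1 ≤ K) (hL : 1 ≤ L) (hdα : 1 ≤ dα) (hdβ : 1 ≤ dβ)
    (Nα : Fin K → ℕ) (Nβ : Fin L → ℕ)
    (hNα : ∀ k, dα ≤ Nα k) (hNβ : ∀ l, dβ ≤ Nβ l)
    (hdiv1 : ∀ k, dβ ∣ (Nα k - dα)) (hdiv2 : ∀ l, dα ∣ (Nβ l - dβ))
    (hineq : ∀ (Iα : Finset (Fin K)) (Iβ : Finset (Fin L)),
      Iα.card * Iβ.card * dα * dβ ≤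
        ∑ k ∈ Iα, dα * (Nα k - dα) + ∑ l ∈ Iβ, dβ * (Nβ l - dβ)) :
    ∃ (G3 : ∀ (k : Fin K) (l : Fin L), Matrix (Fin (Nα k - dα)) (Fin dβ) ℂ)
      (G2 : ∀ (k : Fin K) (l : Fin L), Matrix (Fin dα) (Fin (Nβ l - dβ)) ℂ),
      Function.Surjective
        (fun (UV : (∀ k : Fin K, Matrix (Fin (Nα k - dα)) (Fin dα) ℂ) ×
            (∀ l : Fin L, Matrix (Fin (Nβ l - dβ)) (Fin dβ) ℂ)) =>
          (fun (k : Fin K) (l : Fin L) => (UV.1 k)ᴴ * G3 k l + G2 k l * UV.2 l :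
            ∀ (k : Fin K) (l : Fin L), Matrix (Fin dα) (Fin dβ) ℂ)) := by
  classical
  have hmk : ∀ k, (Nα k - dα) / dβ * dβ = Nα k - dα := fun k => Nat.div_mul_cancel (hdiv1 k)
  have hnl : ∀ l, (Nβ l - dβ) / dα * dα = Nβ l - dβ := fun l => Nat.div_mul_cancel (hdiv2 l)
  let eα : ∀ k : Fin K, Fin (Nα k - dα) ≃ Fin ((Nα k - dα) / dβ) × Fin dβ := fun k =>
    (finCongr (hmk k).symm).trans finProdFinEquiv.symm
  let eβ : ∀ l : Fin L, Fin (Nβ l - dβ) ≃ Fin ((Nβ l - dβ) / dα) × Fin dα := fun l =>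
    (finCongr (hnl l).symm).trans finProdFinEquiv.symm
  have hhall : ∀ (Iα : Finset (Fin K)) (Iβ : Finset (Fin L)),
      Iα.card * Iβ.card ≤ ∑ k ∈ Iα, (Nα k - dα) / dβ + ∑ l ∈ Iβ, (Nβ l - dβ) / dα := by
    intro Iα Iβ
    have h := hineq Iα Iβ
    have e1 : ∑ k ∈ Iα, dα * (Nα k - dα) = dα * dβ * ∑ k ∈ Iα, (Nα k - dα) / dβ := by
      rw [Finset.mul_sum]
      refine Finset.sum_congr rfl fun k _ => ?_
      conv_lhs => rw [← hmk k]
      ring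
    have e2 : ∑ l ∈ Iβ, dβ * (Nβ l - dβ) = dα * dβ * ∑ l ∈ Iβ, (Nβ l - dβ) / dα := by
      rw [Finset.mul_sum]
      refine Finset.sum_congr rfl fun l _ => ?_
      conv_lhs => rw [← hnl l]
      ring
    rw [e1, e2, ← Nat.mul_add] at h
    have hh : dα * dβ * (Iα.card * Iβ.card) ≤
        dα * dβ * (∑ k ∈ Iα, (Nα k - dα) / dβ + ∑ l ∈ Iβ, (Nβ l - dβ) / dα) := by
      calc dα * dβ * (Iα.card * Iβ.card) = Iα.card * Iβ.card * dα * dβ := by ring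
        _ ≤ _ := h
    exact Nat.le_of_mul_le_mul_left hh (by positivity)
  obtain ⟨f, hfinj, hfmem⟩ := exists_ia_matching K L (fun k => (Nα k - dα) / dβ)
    (fun l => (Nβ l - dβ) / dα) hhall
  refine ⟨fun k l => fun r c =>
      if f (k, l) = Sum.inl ⟨k, (eα k r).1⟩ ∧ c = (eα k r).2 then 1 else 0,
    fun k l => fun a c =>
      if f (k, l) = Sum.inr ⟨l, (eβ l c).1⟩ ∧ a = (eβ l c).2 then 1 else 0, ?_⟩
  intro F
  refine ⟨⟨fun k => fun r a =>
      if h : ∃ l, f (k, l) = Sum.inl ⟨k, (eα k r).1⟩ then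
        star (F k h.choose a (eα k r).2) else 0,
    fun l => fun c b =>
      if h : ∃ k, f (k, l) = Sum.inr ⟨l, (eβ l c).1⟩ then
        F h.choose l (eβ l c).2 b else 0⟩, ?_⟩
  funext k l
  ext a b
  simp only [Matrix.add_apply, Matrix.mul_apply, Matrix.conjTranspose_apply]
  erw [Matrix.mul_apply, Matrix.mul_apply]
  rcases hfmem k l with ⟨i₀, hf⟩ | ⟨j₀, hf⟩
  · -- the pair (k, l) is served by a block of Ū_k
    have hz : (∑ c, (if f (k, l) = Sum.inr ⟨l, (eβ l c).1⟩ ∧ a = (eβ l c).2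
        then (1:ℂ) else 0) *
        (if h : ∃ k', f (k', l) = Sum.inr ⟨l, (eβ l c).1⟩ then
          F h.choose l (eβ l c).2 b else 0)) = 0 := by
      apply Finset.sum_eq_zero
      intro c _
      rw [if_neg, zero_mul]
      rintro ⟨h1, -⟩
      rw [hf] at h1
      exact absurd h1 (by simp)
    rw [hz, add_zero]
    have hcond : ∀ r : Fin (Nα k - dα),
        (f (k, l) = Sum.inl ⟨k, (eα k r).1⟩ ∧ b = (eα k r).2) ↔ eα k r = (i₀, b) := by
      intro r
      constructor
      · rintro ⟨h1, h2⟩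
        rw [hf] at h1
        have h3 : i₀ = (eα k r).1 := by simpa using h1
        exact Prod.ext h3.symm h2.symm
      · intro h1
        rw [hf, h1]
        exact ⟨rfl, rfl⟩
    have hrw : (∑ r, star (if h : ∃ l', f (k, l') = Sum.inl ⟨k, (eα k r).1⟩ then
          star (F k h.choose a (eα k r).2) else 0) *
        (if f (k, l) = Sum.inl ⟨k, (eα k r).1⟩ ∧ b = (eα k r).2 then 1 else 0)) =
        ∑ r, star (if h : ∃ l', f (k, l') = Sum.inl ⟨k, (eα k r).1⟩ then
          star (F k h.choose a (eα k r).2) else 0) *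
        (if eα k r = (i₀, b) then 1 else 0) := by
      refine Finset.sum_congr rfl fun r _ => ?_
      rw [if_congr (hcond r) rfl rfl]
    erw [hrw, sum_mul_ite_eq (eα k)
      (fun r => star (if h : ∃ l', f (k, l') = Sum.inl ⟨k, (eα k r).1⟩ then
        star (F k h.choose a (eα k r).2) else 0)) (i₀, b)]
    simp only [Equiv.apply_symm_apply]
    have hex : ∃ l', f (k, l') = Sum.inl ⟨k, i₀⟩ := ⟨l, hf⟩
    rw [dif_pos hex]
    have hl : hex.choose = l := congrArg Prod.snd (hfinj (hex.choose_spec.trans hf.symm))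
    rw [hl, star_star]
  · -- the pair (k, l) is served by a block of V̄_l
    have hz : (∑ r, star (if h : ∃ l', f (k, l') = Sum.inl ⟨k, (eα k r).1⟩ then
          star (F k h.choose a (eα k r).2) else 0) *
        (if f (k, l) = Sum.inl ⟨k, (eα k r).1⟩ ∧ b = (eα k r).2 then 1 else 0)) = 0 := by
      apply Finset.sum_eq_zero
      intro r _
      rw [if_neg, mul_zero]
      rintro ⟨h1, -⟩
      rw [hf] at h1
      exact absurd h1 (by simp)
    erw [hz, zero_add]
    have hcond : ∀ c : Fin (Nβ l - dβ),
        (f (k, l) = Sum.inr ⟨l, (eβ l c).1⟩ ∧ a = (eβ l c).2) ↔ eβ l c = (j₀, a) := by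
      intro c
      constructor
      · rintro ⟨h1, h2⟩
        rw [hf] at h1
        have h3 : j₀ = (eβ l c).1 := by simpa using h1
        exact Prod.ext h3.symm h2.symm
      · intro h1
        rw [hf, h1]
        exact ⟨rfl, rfl⟩
    have hrw : (∑ c, (if f (k, l) = Sum.inr ⟨l, (eβ l c).1⟩ ∧ a = (eβ l c).2
        then (1:ℂ) else 0) *
        (if h : ∃ k', f (k', l) = Sum.inr ⟨l, (eβ l c).1⟩ then
          F h.choose l (eβ l c).2 b else 0)) =
        ∑ c, (if eβ l c = (j₀, a) then (1:ℂ) else 0) *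
        (if h : ∃ k', f (k', l) = Sum.inr ⟨l, (eβ l c).1⟩ then
          F h.choose l (eβ l c).2 b else 0) := by
      refine Finset.sum_congr rfl fun c _ => ?_
      rw [if_congr (hcond c) rfl rfl]
    rw [hrw, sum_ite_mul_eq (eβ l)
      (fun c => (if h : ∃ k', f (k', l) = Sum.inr ⟨l, (eβ l c).1⟩ then
        F h.choose l (eβ l c).2 b else 0)) (j₀, a)]
    simp only [Equiv.apply_symm_apply]
    have hex : ∃ k', f (k', l) = Sum.inr ⟨l, j₀⟩ := ⟨k, hf⟩
    rw [dif_pos hex]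
    have hk : hex.choose = k := congrArg Prod.fst (hfinj (hex.choose_spec.trans hf.symm))
    rw [hk]
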